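/- arXiv:0901.2094 — 2 statements merged into one kernel-verified Lean document; each statement's English description precedes it below -/
import Mathlib

section
/- Upper bound on the size of a circular c-order joint type class: The number of pairs of binary vectors of length k with circular c-order joint type λ satisfies |𝒯^k_λ| ≤ C₂ · 2^{k(H(λ) − H(λ'))} = C₂ · 2^{k H(λ̃|λ')}, where C₂ = 2^{2(c−1)}. -/
open Finset

noncomputable section

/-- Shannon entropy (base 2). -/
def H2 {α : Type*} [Fintype α] (p : α → ℝ) : ℝ :=
  ∑ a, -(p a * Real.logb 2 (p a))

/-- The circular window of length `c` of the vector `v` starting at position `t`. -/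
def cwin (c k : ℕ) (v : Fin k → Bool) (t : Fin k) : Fin c → Bool :=
  fun i => v ⟨((t : ℕ) + (i : ℕ)) % k, Nat.mod_lt _ t.pos⟩

/-- The circular `c`-order type of `v`: the frequency of each length-`c` pattern among
the `k` circular windows of `v`. -/
def ctype (c k : ℕ) (v : Fin k → Bool) (a : Fin c → Bool) : ℝ :=
  ((univ.filter fun t : Fin k => cwin c k v t = a).card : ℝ) / k

/-- The circular `c`-order joint type of a pair `(v, w)`. -/
def jctype (c k : ℕ) (v w : Fin k → Bool) (a b : Fin c → Bool) : ℝ :=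
  ((univ.filter fun t : Fin k => cwin c k v t = a ∧ cwin c k w t = b).card : ℝ) / k

/-- Extension of a length-`(c-1)` pattern by a final bit `x` to a length-`c` pattern. -/
def extPat (c : ℕ) (a' : Fin (c - 1) → Bool) (x : Bool) : Fin c → Bool :=
  fun i => if h : (i : ℕ) < c - 1 then a' ⟨i, h⟩ else x

/-- The `(c-1)`-order marginal `γ'` of a `c`-order type `γ`. -/
def margPrefix (c : ℕ) (γ : (Fin c → Bool) → ℝ) (a' : Fin (c - 1) → Bool) : ℝ :=
  ∑ x : Bool, γ (extPat c a' x)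

/-- The conditional entropy `H(γ̃|γ') = H(γ) − H(γ')`. -/
def HcondT (c : ℕ) (γ : (Fin c → Bool) → ℝ) : ℝ :=
  H2 γ - H2 (margPrefix c γ)

/-- The `(c-1)`-order marginal `λ'` of a `c`-order joint type `λ`. -/
def margPrefix2 (c : ℕ) (lam : (Fin c → Bool) → (Fin c → Bool) → ℝ)
    (q : (Fin (c - 1) → Bool) × (Fin (c - 1) → Bool)) : ℝ :=
  ∑ x : Bool, ∑ y : Bool, lam (extPat c q.1 x) (extPat c q.2 y)

/-- The conditional entropy `H(λ̃|λ') = H(λ) − H(λ')`. -/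
def HcondJ (c : ℕ) (lam : (Fin c → Bool) → (Fin c → Bool) → ℝ) : ℝ :=
  H2 (fun p : (Fin c → Bool) × (Fin c → Bool) => lam p.1 p.2) - H2 (margPrefix2 c lam)

/-- First marginal (the type of `v_i`) of a `c`-order joint type. -/
def margFst (c : ℕ) (lam : (Fin c → Bool) → (Fin c → Bool) → ℝ)
    (a : Fin c → Bool) : ℝ :=
  ∑ b : Fin c → Bool, lam a b

lemma tree_sum {S A : Type*} [Fintype A] (p : S → A → ℝ) (δ : S → A → S)
    (hp : ∀ s a, 0 ≤ p s a) (hsum : ∀ s, ∑ a, p s a ≤ 1) :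
    ∀ (n : ℕ) (s0 : S),
      ∑ h : Fin n → A, ∏ t : Fin n, p (List.foldl δ s0 ((List.ofFn h).take (t : ℕ))) (h t) ≤ 1 := by
  intro n
  induction n with
  | zero => intro s0; simp
  | succ n ih =>
    intro s0
    have key : ∀ (a : A) (g : Fin n → A),
        (∏ t : Fin (n+1), p (List.foldl δ s0 ((List.ofFn (Fin.cons a g : Fin (n+1) → A)).take (t : ℕ))) ((Fin.cons a g : Fin (n+1) → A) t))
        = p s0 a * ∏ t : Fin n, p (List.foldl δ (δ s0 a) ((List.ofFn g).take (t : ℕ))) (g t) := by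
      intro a g
      rw [Fin.prod_univ_succ]
      apply congrArg₂
      · simp
      · apply Finset.prod_congr rfl
        intro t _
        simp [List.ofFn_succ, Fin.cons_succ, List.take_succ_cons]
    calc ∑ h : Fin (n+1) → A, ∏ t : Fin (n+1), p (List.foldl δ s0 ((List.ofFn h).take (t:ℕ))) (h t)
        = ∑ pr : A × (Fin n → A), ∏ t : Fin (n+1), p (List.foldl δ s0 ((List.ofFn (Fin.cons pr.1 pr.2 : Fin (n+1) → A)).take (t:ℕ))) ((Fin.cons pr.1 pr.2 : Fin (n+1) → A) t) := by
          rw [← Equiv.sum_comp (Fin.consEquiv (fun _ : Fin (n+1) => A))]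
          simp [Fin.consEquiv]
      _ = ∑ a : A, ∑ g : Fin n → A, p s0 a * ∏ t : Fin n, p (List.foldl δ (δ s0 a) ((List.ofFn g).take (t:ℕ))) (g t) := by
          rw [Fintype.sum_prod_type]
          exact Finset.sum_congr rfl fun a _ => Finset.sum_congr rfl fun g _ => key a g
      _ = ∑ a : A, p s0 a * ∑ g : Fin n → A, ∏ t : Fin n, p (List.foldl δ (δ s0 a) ((List.ofFn g).take (t:ℕ))) (g t) := by
          simp [Finset.mul_sum]
      _ ≤ ∑ a : A, p s0 a * 1 := by
          apply Finset.sum_le_sum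
          intro a _
          exact mul_le_mul_of_nonneg_left (ih (δ s0 a)) (hp s0 a)
      _ ≤ 1 := by simpa using hsum s0

def prePat (c : ℕ) (a : Fin c → Bool) : Fin (c - 1) → Bool :=
  fun i => a ⟨(i : ℕ), lt_of_lt_of_le i.2 (Nat.sub_le c 1)⟩

def shiftPat (m : ℕ) (a : Fin m → Bool) (x : Bool) : Fin m → Bool :=
  fun i => if h : (i : ℕ) + 1 < m then a ⟨(i : ℕ) + 1, h⟩ else x

lemma pre_extPat (c : ℕ) (a' : Fin (c-1) → Bool) (x : Bool) :
    prePat c (extPat c a' x) = a' := by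
  funext i
  simp [prePat, extPat, i.2]

lemma extPat_pre (c : ℕ) (hc : 1 ≤ c) (a : Fin c → Bool) :
    extPat c (prePat c a) (a ⟨c - 1, by omega⟩) = a := by
  funext i
  by_cases h : (i : ℕ) < c - 1
  · simp [extPat, prePat, h]
  · have : (i : ℕ) = c - 1 := by have := i.2; omega
    simp only [extPat, dif_neg h]
    congr 1
    exact (Fin.ext this.symm)

lemma extPat_inj (c : ℕ) (hc : 1 ≤ c) {a' b' : Fin (c-1) → Bool} {x y : Bool}
    (h : extPat c a' x = extPat c b' y) : a' = b' ∧ x = y := by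
  constructor
  · have := congrArg (prePat c) h
    rwa [pre_extPat, pre_extPat] at this
  · have := congrFun h ⟨c - 1, by omega⟩
    simpa [extPat] using this

lemma pre_cwin (c k : ℕ) (v : Fin k → Bool) (t : Fin k) :
    prePat c (cwin c k v t) = cwin (c-1) k v t := rfl

lemma cwin_last (c k : ℕ) (hc : 1 ≤ c) (v : Fin k → Bool) (t : Fin k) :
    cwin c k v t ⟨c - 1, by omega⟩ = v ⟨((t : ℕ) + (c - 1)) % k, Nat.mod_lt _ t.pos⟩ := rfl

lemma ext_cwin (c k : ℕ) (hc : 1 ≤ c) (hk : 0 < k) (v : Fin k → Bool) (t : ℕ) :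
    extPat c (cwin (c-1) k v ⟨t % k, Nat.mod_lt _ hk⟩)
      (v ⟨(t + (c - 1)) % k, Nat.mod_lt _ hk⟩) = cwin c k v ⟨t % k, Nat.mod_lt _ hk⟩ := by
  funext i
  by_cases h : (i : ℕ) < c - 1
  · simp only [extPat, dif_pos h, cwin]
  · have hi : (i : ℕ) = c - 1 := by have := i.2; omega
    simp only [extPat, dif_neg h, cwin]
    congr 1
    refine Fin.ext ?_
    simp only [Nat.mod_add_mod]
    rw [hi]

lemma cwin_shift (c k : ℕ) (hk : 0 < k) (v : Fin k → Bool) (t : ℕ) :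
    shiftPat (c-1) (cwin (c-1) k v ⟨t % k, Nat.mod_lt _ hk⟩)
      (v ⟨(t + (c - 1)) % k, Nat.mod_lt _ hk⟩)
      = cwin (c-1) k v ⟨(t + 1) % k, Nat.mod_lt _ hk⟩ := by
  funext i
  by_cases h : (i : ℕ) + 1 < c - 1
  · simp only [shiftPat, dif_pos h, cwin]
    congr 1
    refine Fin.ext ?_
    simp only [Nat.mod_add_mod]
    congr 1
    omega
  · have hi : (i : ℕ) + 1 = c - 1 := by have := i.2; omega
    simp only [shiftPat, dif_neg h, cwin]
    congr 1
    refine Fin.ext ?_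
    simp only [Nat.mod_add_mod]
    congr 1
    omega

lemma cwin_eq_extPat_iff (c k : ℕ) (hc : 1 ≤ c) (v : Fin k → Bool) (t : Fin k)
    (a' : Fin (c-1) → Bool) (x : Bool) :
    cwin c k v t = extPat c a' x ↔
      (cwin (c-1) k v t = a' ∧ v ⟨((t:ℕ) + (c - 1)) % k, Nat.mod_lt _ t.pos⟩ = x) := by
  constructor
  · intro h
    constructor
    · rw [← pre_cwin, h, pre_extPat]
    · have := congrFun h ⟨c - 1, by omega⟩
      simpa [extPat, cwin] using this
  · rintro ⟨h1, h2⟩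
    have ht : (⟨(t:ℕ) % k, Nat.mod_lt _ t.pos⟩ : Fin k) = t := Fin.ext (Nat.mod_eq_of_lt t.2)
    have := ext_cwin c k hc t.pos v (t : ℕ)
    rw [ht] at this
    rw [← this, h1, h2]

def patEquiv (c : ℕ) (hc : 1 ≤ c) : (Fin (c-1) → Bool) × Bool ≃ (Fin c → Bool) where
  toFun p := extPat c p.1 p.2
  invFun a := (prePat c a, a ⟨c - 1, by omega⟩)
  left_inv p := by
    refine Prod.ext ?_ ?_
    · exact pre_extPat c p.1 p.2
    · simp [extPat]
  right_inv a := extPat_pre c hc a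

lemma sum_ext_pairs (c : ℕ) (hc : 1 ≤ c) {β : Type*} [AddCommMonoid β]
    (F : (Fin c → Bool) → (Fin c → Bool) → β) :
    ∑ u : (Fin c → Bool) × (Fin c → Bool), F u.1 u.2
      = ∑ q : (Fin (c-1) → Bool) × (Fin (c-1) → Bool), ∑ x : Bool, ∑ y : Bool,
          F (extPat c q.1 x) (extPat c q.2 y) := by
  rw [← Fintype.sum_equiv
      ((Equiv.prodProdProdComm (Fin (c-1) → Bool) (Fin (c-1) → Bool) Bool Bool).trans
        ((patEquiv c hc).prodCongr (patEquiv c hc)))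
      (fun r : ((Fin (c-1) → Bool) × (Fin (c-1) → Bool)) × (Bool × Bool) =>
        F (extPat c r.1.1 r.2.1) (extPat c r.1.2 r.2.2))
      (fun u => F u.1 u.2) (fun r => by obtain ⟨⟨q1, q2⟩, x, y⟩ := r; rfl)]
  rw [Fintype.sum_prod_type]
  refine Finset.sum_congr rfl fun q _ => ?_
  rw [Fintype.sum_prod_type]

def wcount (c k : ℕ) (v w : Fin k → Bool) (u : (Fin c → Bool) × (Fin c → Bool)) : ℕ :=
  (univ.filter fun t : Fin k => cwin c k v t = u.1 ∧ cwin c k w t = u.2).card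

def pcount (c k : ℕ) (v w : Fin k → Bool) (q : (Fin (c-1) → Bool) × (Fin (c-1) → Bool)) : ℕ :=
  ∑ x : Bool, ∑ y : Bool, wcount c k v w (extPat c q.1 x, extPat c q.2 y)

lemma jctype_eq_wcount (c k : ℕ) (v w : Fin k → Bool) (a b : Fin c → Bool) :
    jctype c k v w a b = (wcount c k v w (a, b) : ℝ) / k := rfl

lemma margPrefix2_jctype (c k : ℕ) (v w : Fin k → Bool)
    (q : (Fin (c-1) → Bool) × (Fin (c-1) → Bool)) :
    margPrefix2 c (jctype c k v w) q = (pcount c k v w q : ℝ) / k := by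
  unfold margPrefix2 pcount
  push_cast
  rw [Finset.sum_div]
  refine Finset.sum_congr rfl fun x _ => ?_
  rw [Finset.sum_div]
  rfl

lemma bool_ind_sum (b₁ b₂ : Bool) :
    (∑ x : Bool, ∑ y : Bool, if (b₁ = x ∧ b₂ = y) then (1:ℕ) else 0) = 1 := by
  cases b₁ <;> cases b₂ <;> decide

/-- Stationarity: the prefix-marginal count equals the count of `(c-1)`-windows. -/
lemma pcount_eq_card (c k : ℕ) (hc : 1 ≤ c) (v w : Fin k → Bool)
    (q : (Fin (c-1) → Bool) × (Fin (c-1) → Bool)) :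
    pcount c k v w q
      = (univ.filter fun t : Fin k => cwin (c-1) k v t = q.1 ∧ cwin (c-1) k w t = q.2).card := by
  unfold pcount wcount
  simp only [Finset.card_filter]
  have key : ∀ t : Fin k,
      (∑ x : Bool, ∑ y : Bool,
        if (cwin c k v t = extPat c q.1 x ∧ cwin c k w t = extPat c q.2 y) then (1:ℕ) else 0)
      = if (cwin (c-1) k v t = q.1 ∧ cwin (c-1) k w t = q.2) then (1:ℕ) else 0 := by
    intro t
    simp only [cwin_eq_extPat_iff c k hc]
    by_cases hA : cwin (c-1) k v t = q.1
    · by_cases hB : cwin (c-1) k w t = q.2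
      · simp only [hA, hB, true_and, if_true, and_true]
        exact bool_ind_sum _ _
      · simp [hA, hB]
    · simp [hA]
  calc (∑ x : Bool, ∑ y : Bool, ∑ t : Fin k,
        if (cwin c k v t = extPat c q.1 x ∧ cwin c k w t = extPat c q.2 y) then (1:ℕ) else 0)
      = ∑ x : Bool, ∑ t : Fin k, ∑ y : Bool,
        if (cwin c k v t = extPat c q.1 x ∧ cwin c k w t = extPat c q.2 y) then (1:ℕ) else 0 :=
        Finset.sum_congr rfl fun x _ => Finset.sum_comm
    _ = ∑ t : Fin k, ∑ x : Bool, ∑ y : Bool,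
        if (cwin c k v t = extPat c q.1 x ∧ cwin c k w t = extPat c q.2 y) then (1:ℕ) else 0 :=
        Finset.sum_comm
    _ = ∑ t : Fin k, if (cwin (c-1) k v t = q.1 ∧ cwin (c-1) k w t = q.2) then (1:ℕ) else 0 :=
        Finset.sum_congr rfl fun t _ => key t

lemma two_sum_ge (g : Bool → Bool → ℕ) (x0 y0 : Bool) :
    g x0 y0 ≤ ∑ x : Bool, ∑ y : Bool, g x y := by
  simp only [Fintype.sum_bool]
  cases x0 <;> cases y0 <;> omega

lemma wcount_le_pcount (c k : ℕ) (hc : 1 ≤ c) (v w : Fin k → Bool)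
    (u : (Fin c → Bool) × (Fin c → Bool)) :
    wcount c k v w u ≤ pcount c k v w (prePat c u.1, prePat c u.2) := by
  have h1 : wcount c k v w u = wcount c k v w
      (extPat c (prePat c u.1) (u.1 ⟨c-1, by omega⟩),
       extPat c (prePat c u.2) (u.2 ⟨c-1, by omega⟩)) := by
    rw [extPat_pre c hc u.1, extPat_pre c hc u.2]
  rw [h1]
  exact two_sum_ge
    (fun x y => wcount c k v w (extPat c (prePat c u.1) x, extPat c (prePat c u.2) y)) _ _

lemma logb_term_helper (N M k : ℕ) (hk : k ≠ 0) (hNM : N ≤ M) :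
    -((N:ℝ) * Real.logb 2 ((N:ℝ)/k)) + (N:ℝ) * Real.logb 2 ((M:ℝ)/k)
      = (N:ℝ) * Real.logb 2 ((M:ℝ)/(N:ℝ)) := by
  rcases Nat.eq_zero_or_pos N with h0 | hpos
  · simp [h0]
  · have hN : (N:ℝ) ≠ 0 := Nat.cast_ne_zero.mpr hpos.ne'
    have hM : (M:ℝ) ≠ 0 := Nat.cast_ne_zero.mpr (lt_of_lt_of_le hpos hNM).ne'
    have hk' : (k:ℝ) ≠ 0 := Nat.cast_ne_zero.mpr hk
    rw [Real.logb_div hN hk', Real.logb_div hM hk', Real.logb_div hM hN]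
    ring

lemma hcond_eq (c k : ℕ) (hc : 1 ≤ c) (hk : 0 < k) (v w : Fin k → Bool) :
    (k : ℝ) * HcondJ c (jctype c k v w)
      = ∑ u : (Fin c → Bool) × (Fin c → Bool),
          (wcount c k v w u : ℝ) *
            Real.logb 2 ((pcount c k v w (prePat c u.1, prePat c u.2) : ℝ)
              / (wcount c k v w u : ℝ)) := by
  have hk' : (k:ℝ) ≠ 0 := Nat.cast_ne_zero.mpr hk.ne'
  unfold HcondJ H2
  rw [mul_sub]
  have e1 : ((k:ℝ) * ∑ u : (Fin c → Bool) × (Fin c → Bool),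
      -(jctype c k v w u.1 u.2 * Real.logb 2 (jctype c k v w u.1 u.2)))
      = ∑ u : (Fin c → Bool) × (Fin c → Bool),
          -((wcount c k v w u : ℝ) * Real.logb 2 ((wcount c k v w u : ℝ)/k)) := by
    rw [Finset.mul_sum]
    refine Finset.sum_congr rfl fun u _ => ?_
    rw [show jctype c k v w u.1 u.2 = (wcount c k v w u : ℝ)/k from rfl]
    rw [mul_neg, ← mul_assoc, mul_div_cancel₀ _ hk']
  have e2 : ((k:ℝ) * ∑ q : (Fin (c-1) → Bool) × (Fin (c-1) → Bool),
      -(margPrefix2 c (jctype c k v w) q * Real.logb 2 (margPrefix2 c (jctype c k v w) q)))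
      = ∑ q : (Fin (c-1) → Bool) × (Fin (c-1) → Bool),
          -((pcount c k v w q : ℝ) * Real.logb 2 ((pcount c k v w q : ℝ)/k)) := by
    rw [Finset.mul_sum]
    refine Finset.sum_congr rfl fun q _ => ?_
    rw [margPrefix2_jctype]
    rw [mul_neg, ← mul_assoc, mul_div_cancel₀ _ hk']
  rw [e1, e2, sub_eq_add_neg, ← Finset.sum_neg_distrib]
  simp only [neg_neg]
  have e3 : (∑ q : (Fin (c-1) → Bool) × (Fin (c-1) → Bool),
      (pcount c k v w q : ℝ) * Real.logb 2 ((pcount c k v w q : ℝ)/k))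
      = ∑ u : (Fin c → Bool) × (Fin c → Bool),
          (wcount c k v w u : ℝ) *
            Real.logb 2 ((pcount c k v w (prePat c u.1, prePat c u.2) : ℝ)/k) := by
    rw [sum_ext_pairs c hc (fun a b => (wcount c k v w (a, b) : ℝ) *
          Real.logb 2 ((pcount c k v w (prePat c a, prePat c b) : ℝ)/k))]
    refine Finset.sum_congr rfl fun q _ => ?_
    have hM : (pcount c k v w q : ℝ)
        = ∑ x : Bool, ∑ y : Bool, (wcount c k v w (extPat c q.1 x, extPat c q.2 y) : ℝ) := by
      unfold pcount; push_cast; rfl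
    simp only [pre_extPat, Prod.mk.eta]
    rw [hM, Finset.sum_mul]
    exact Finset.sum_congr rfl fun x _ => Finset.sum_mul _ _ _
  rw [e3, ← Finset.sum_add_distrib]
  refine Finset.sum_congr rfl fun u _ => ?_
  exact logb_term_helper _ _ k hk.ne' (wcount_le_pcount c k hc v w u)

def lamt (c k : ℕ) (v w : Fin k → Bool) (u : (Fin c → Bool) × (Fin c → Bool)) : ℝ :=
  (wcount c k v w u : ℝ) / (pcount c k v w (prePat c u.1, prePat c u.2) : ℝ)

lemma lamt_nonneg (c k : ℕ) (v w : Fin k → Bool) (u : (Fin c → Bool) × (Fin c → Bool)) :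
    0 ≤ lamt c k v w u :=
  div_nonneg (Nat.cast_nonneg _) (Nat.cast_nonneg _)

lemma lamt_le_one (c k : ℕ) (hc : 1 ≤ c) (v w : Fin k → Bool)
    (u : (Fin c → Bool) × (Fin c → Bool)) : lamt c k v w u ≤ 1 :=
  div_le_one_of_le₀ (Nat.cast_le.mpr (wcount_le_pcount c k hc v w u)) (Nat.cast_nonneg _)

lemma lamt_pos (c k : ℕ) (v w : Fin k → Bool) (u : (Fin c → Bool) × (Fin c → Bool))
    (hu : 0 < wcount c k v w u) (hNM : wcount c k v w u ≤ pcount c k v w (prePat c u.1, prePat c u.2)) :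
    0 < lamt c k v w u :=
  div_pos (Nat.cast_pos.mpr hu) (Nat.cast_pos.mpr (lt_of_lt_of_le hu hNM))

def Qval (c k : ℕ) (v w : Fin k → Bool) : ℝ :=
  ∏ u : (Fin c → Bool) × (Fin c → Bool), lamt c k v w u ^ (wcount c k v w u)

lemma Qval_pos (c k : ℕ) (hc : 1 ≤ c) (v w : Fin k → Bool) : 0 < Qval c k v w := by
  refine Finset.prod_pos fun u _ => ?_
  rcases Nat.eq_zero_or_pos (wcount c k v w u) with h0 | hpos
  · rw [h0, pow_zero]; exact one_pos
  · exact pow_pos (lamt_pos c k v w u hpos (wcount_le_pcount c k hc v w u)) _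

lemma Qval_eq (c k : ℕ) (hc : 1 ≤ c) (hk : 0 < k) (v w : Fin k → Bool) :
    Qval c k v w = (2:ℝ) ^ (-((k:ℝ) * HcondJ c (jctype c k v w))) := by
  have hlog : Real.logb 2 (Qval c k v w) = -((k:ℝ) * HcondJ c (jctype c k v w)) := by
    rw [hcond_eq c k hc hk v w]
    unfold Qval
    rw [Real.logb_prod _ _ (fun u _ => ?_)]
    · rw [← Finset.sum_neg_distrib]
      refine Finset.sum_congr rfl fun u _ => ?_
      rw [Real.logb_pow]
      rcases Nat.eq_zero_or_pos (wcount c k v w u) with h0 | hpos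
      · simp [h0]
      · have hNM := wcount_le_pcount c k hc v w u
        have hN : (0:ℝ) < (wcount c k v w u : ℝ) := Nat.cast_pos.mpr hpos
        have hM : (0:ℝ) < (pcount c k v w (prePat c u.1, prePat c u.2) : ℝ) :=
          Nat.cast_pos.mpr (lt_of_lt_of_le hpos hNM)
        rw [show lamt c k v w u
            = ((pcount c k v w (prePat c u.1, prePat c u.2) : ℝ) / (wcount c k v w u : ℝ))⁻¹ by
          rw [lamt]; rw [inv_div]]
        rw [Real.logb_inv]
        ring
    · rcases Nat.eq_zero_or_pos (wcount c k v w u) with h0 | hpos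
      · rw [h0, pow_zero]; exact one_ne_zero
      · exact (pow_pos (lamt_pos c k v w u hpos (wcount_le_pcount c k hc v w u)) _).ne'
  rw [← hlog, Real.rpow_logb two_pos (by norm_num) (Qval_pos c k hc v w)]

lemma wcount_eq_of_jctype_eq (c k : ℕ) (hk : 0 < k) (v w z1 z2 : Fin k → Bool)
    (h : jctype c k z1 z2 = jctype c k v w) (u : (Fin c → Bool) × (Fin c → Bool)) :
    wcount c k z1 z2 u = wcount c k v w u := by
  have h2 := congrFun (congrFun h u.1) u.2
  rw [jctype_eq_wcount, jctype_eq_wcount] at h2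
  have hk' : (k:ℝ) ≠ 0 := Nat.cast_ne_zero.mpr hk.ne'
  rw [div_eq_div_iff hk' hk'] at h2
  have h3 : ((wcount c k z1 z2 (u.1, u.2) : ℝ)) = (wcount c k v w (u.1, u.2) : ℝ) :=
    mul_right_cancel₀ hk' h2
  exact_mod_cast h3

lemma prod_lamt (c k : ℕ) (v w z1 z2 : Fin k → Bool)
    (hz : ∀ u, wcount c k z1 z2 u = wcount c k v w u) :
    ∏ t : Fin k, lamt c k v w (cwin c k z1 t, cwin c k z2 t) = Qval c k v w := by
  unfold Qval
  rw [← Finset.prod_fiberwise_of_maps_to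
      (g := fun t : Fin k => (cwin c k z1 t, cwin c k z2 t))
      (fun t _ => Finset.mem_univ _)
      (fun t => lamt c k v w (cwin c k z1 t, cwin c k z2 t))]
  refine Finset.prod_congr rfl fun u _ => ?_
  have hcard : (univ.filter fun t : Fin k => (cwin c k z1 t, cwin c k z2 t) = u).card
      = wcount c k v w u := by
    rw [← hz u]
    unfold wcount
    congr 1
    apply Finset.filter_congr
    intro t _
    simp [Prod.ext_iff]
  calc (∏ t ∈ univ.filter fun t : Fin k => (cwin c k z1 t, cwin c k z2 t) = u,
          lamt c k v w (cwin c k z1 t, cwin c k z2 t))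
      = ∏ _t ∈ univ.filter fun t : Fin k => (cwin c k z1 t, cwin c k z2 t) = u,
          lamt c k v w u := by
        refine Finset.prod_congr rfl fun t ht => ?_
        rw [(Finset.mem_filter.mp ht).2]
    _ = lamt c k v w u ^ (wcount c k v w u) := by
        rw [Finset.prod_const, hcard]

def dstep (c : ℕ) (s : (Fin (c-1) → Bool) × (Fin (c-1) → Bool)) (a : Bool × Bool) :
    (Fin (c-1) → Bool) × (Fin (c-1) → Bool) :=
  (shiftPat (c-1) s.1 a.1, shiftPat (c-1) s.2 a.2)

def pker (c k : ℕ) (v w : Fin k → Bool)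
    (s : (Fin (c-1) → Bool) × (Fin (c-1) → Bool)) (a : Bool × Bool) : ℝ :=
  (wcount c k v w (extPat c s.1 a.1, extPat c s.2 a.2) : ℝ) / (pcount c k v w s : ℝ)

lemma pker_nonneg (c k : ℕ) (v w : Fin k → Bool) (s : _) (a : _) :
    0 ≤ pker c k v w s a := div_nonneg (Nat.cast_nonneg _) (Nat.cast_nonneg _)

lemma pker_sum_le_one (c k : ℕ) (v w : Fin k → Bool)
    (s : (Fin (c-1) → Bool) × (Fin (c-1) → Bool)) :
    ∑ a : Bool × Bool, pker c k v w s a ≤ 1 := by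
  unfold pker
  rw [Fintype.sum_prod_type]
  have : (∑ x : Bool, ∑ y : Bool,
      (wcount c k v w (extPat c s.1 x, extPat c s.2 y) : ℝ) / (pcount c k v w s : ℝ))
      = (pcount c k v w s : ℝ) / (pcount c k v w s : ℝ) := by
    rw [show ((pcount c k v w s : ℝ))
        = ∑ x : Bool, ∑ y : Bool, (wcount c k v w (extPat c s.1 x, extPat c s.2 y) : ℝ) by
      unfold pcount; push_cast; rfl]
    rw [Finset.sum_div]
    exact Finset.sum_congr rfl fun x _ => (Finset.sum_div _ _ _).symm
  rw [this]
  rcases eq_or_ne ((pcount c k v w s : ℝ)) 0 with h0 | h0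
  · rw [h0, div_zero]; exact zero_le_one
  · rw [div_self h0]

def emap (c k n : ℕ) (hk : 0 < k) (z : (Fin k → Bool) × (Fin k → Bool)) (t : Fin n) :
    Bool × Bool :=
  (z.1 ⟨((t : ℕ) + (c - 1)) % k, Nat.mod_lt _ hk⟩,
   z.2 ⟨((t : ℕ) + (c - 1)) % k, Nat.mod_lt _ hk⟩)

lemma foldl_state (c k n : ℕ) (hk : 0 < k) (z : (Fin k → Bool) × (Fin k → Bool))
    (s : (Fin (c-1) → Bool) × (Fin (c-1) → Bool))
    (hs : (cwin (c-1) k z.1 ⟨0 % k, Nat.mod_lt _ hk⟩,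
           cwin (c-1) k z.2 ⟨0 % k, Nat.mod_lt _ hk⟩) = s) :
    ∀ m : ℕ, m ≤ n →
      List.foldl (dstep c) s ((List.ofFn (emap c k n hk z)).take m)
        = (cwin (c-1) k z.1 ⟨m % k, Nat.mod_lt _ hk⟩,
           cwin (c-1) k z.2 ⟨m % k, Nat.mod_lt _ hk⟩) := by
  intro m
  induction m with
  | zero => intro _; simpa using hs.symm
  | succ m ih =>
    intro hm1
    have hm : m < n := hm1
    have hgl : (List.ofFn (emap c k n hk z)).take (m+1)
        = (List.ofFn (emap c k n hk z)).take m ++ [emap c k n hk z ⟨m, hm⟩] := by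
      rw [List.take_succ]
      congr
      rw [List.getElem?_ofFn, dif_pos hm]
      rfl
    rw [hgl, List.foldl_append, ih (le_of_lt hm)]
    show dstep c _ _ = _
    unfold dstep emap
    refine Prod.ext ?_ ?_
    · exact cwin_shift c k hk z.1 m
    · exact cwin_shift c k hk z.2 m

lemma card_fiber_bound (c k : ℕ) (hc : 1 ≤ c) (hkc : c ≤ k) (v w : Fin k → Bool)
    (s : (Fin (c-1) → Bool) × (Fin (c-1) → Bool)) :
    ((univ.filter fun z : (Fin k → Bool) × (Fin k → Bool) =>
        jctype c k z.1 z.2 = jctype c k v w ∧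
        (cwin (c-1) k z.1 ⟨0 % k, Nat.mod_lt _ (lt_of_lt_of_le hc hkc)⟩,
         cwin (c-1) k z.2 ⟨0 % k, Nat.mod_lt _ (lt_of_lt_of_le hc hkc)⟩) = s).card : ℝ)
      * Qval c k v w ≤ 1 := by
  have hk : 0 < k := lt_of_lt_of_le hc hkc
  set n := k - (c-1) with hn
  have hnk : n + (c-1) = k := by omega
  set T := (univ.filter fun z : (Fin k → Bool) × (Fin k → Bool) =>
        jctype c k z.1 z.2 = jctype c k v w ∧
        (cwin (c-1) k z.1 ⟨0 % k, Nat.mod_lt _ (lt_of_lt_of_le hc hkc)⟩,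
         cwin (c-1) k z.2 ⟨0 % k, Nat.mod_lt _ (lt_of_lt_of_le hc hkc)⟩) = s) with hT
  set F : (Fin n → Bool × Bool) → ℝ := fun h =>
    ∏ t : Fin n, pker c k v w (List.foldl (dstep c) s ((List.ofFn h).take (t : ℕ))) (h t)
    with hF
  have hFnonneg : ∀ h, 0 ≤ F h := fun h =>
    Finset.prod_nonneg fun t _ => pker_nonneg c k v w _ _
  -- Step 1 : Qval ≤ F (emap z) for z in the fiber
  have step1 : ∀ z ∈ T, Qval c k v w ≤ F (emap c k n hk z) := by
    intro z hz
    rw [hT, Finset.mem_filter] at hz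
    obtain ⟨-, hjz, hsz⟩ := hz
    -- counts of z agree with those of (v, w)
    have hcz : ∀ u, wcount c k z.1 z.2 u = wcount c k v w u :=
      wcount_eq_of_jctype_eq c k hk v w z.1 z.2 hjz
    -- the ℕ-indexed window weight function
    have hQ : Qval c k v w
        = ∏ m ∈ Finset.range k, (fun m : ℕ => lamt c k v w
            (cwin c k z.1 ⟨m % k, Nat.mod_lt _ hk⟩, cwin c k z.2 ⟨m % k, Nat.mod_lt _ hk⟩)) m := by
      rw [← Fin.prod_univ_eq_prod_range]
      rw [← prod_lamt c k v w z.1 z.2 hcz]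
      refine Finset.prod_congr rfl fun t _ => ?_
      have : (⟨(t : ℕ) % k, Nat.mod_lt _ hk⟩ : Fin k) = t := Fin.ext (Nat.mod_eq_of_lt t.2)
      rw [this]
    have hstate : ∀ t : Fin n,
        List.foldl (dstep c) s ((List.ofFn (emap c k n hk z)).take (t : ℕ))
          = (cwin (c-1) k z.1 ⟨(t : ℕ) % k, Nat.mod_lt _ hk⟩,
             cwin (c-1) k z.2 ⟨(t : ℕ) % k, Nat.mod_lt _ hk⟩) :=
      fun t => foldl_state c k n hk z s hsz (t : ℕ) (le_of_lt t.2)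
    have hfac : ∀ t : Fin n,
        pker c k v w (List.foldl (dstep c) s ((List.ofFn (emap c k n hk z)).take (t : ℕ)))
            (emap c k n hk z t)
          = lamt c k v w
              (cwin c k z.1 ⟨(t : ℕ) % k, Nat.mod_lt _ hk⟩,
               cwin c k z.2 ⟨(t : ℕ) % k, Nat.mod_lt _ hk⟩) := by
      intro t
      rw [hstate t]
      show (wcount c k v w (extPat c _ _, extPat c _ _) : ℝ) / _ = _
      rw [show extPat c (cwin (c-1) k z.1 ⟨(t : ℕ) % k, Nat.mod_lt _ hk⟩)
            (emap c k n hk z t).1 = cwin c k z.1 ⟨(t : ℕ) % k, Nat.mod_lt _ hk⟩ from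
          ext_cwin c k hc hk z.1 (t : ℕ),
        show extPat c (cwin (c-1) k z.2 ⟨(t : ℕ) % k, Nat.mod_lt _ hk⟩)
            (emap c k n hk z t).2 = cwin c k z.2 ⟨(t : ℕ) % k, Nat.mod_lt _ hk⟩ from
          ext_cwin c k hc hk z.2 (t : ℕ)]
      rfl
    have hFz : F (emap c k n hk z)
        = ∏ m ∈ Finset.range n, (fun m : ℕ => lamt c k v w
            (cwin c k z.1 ⟨m % k, Nat.mod_lt _ hk⟩, cwin c k z.2 ⟨m % k, Nat.mod_lt _ hk⟩)) m := by
      rw [← Fin.prod_univ_eq_prod_range, hF]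
      exact Finset.prod_congr rfl fun t _ => hfac t
    rw [hQ, hFz]
    rw [Finset.range_eq_Ico, ← Finset.prod_Ico_consecutive _ (Nat.zero_le n) (by omega : n ≤ k),
      ← Finset.range_eq_Ico]
    have htail : (∏ i ∈ Finset.Ico n k, (fun m : ℕ => lamt c k v w
        (cwin c k z.1 ⟨m % k, Nat.mod_lt _ hk⟩, cwin c k z.2 ⟨m % k, Nat.mod_lt _ hk⟩)) i) ≤ 1 :=
      Finset.prod_le_one (fun i _ => lamt_nonneg c k v w _) (fun i _ => lamt_le_one c k hc v w _)
    have hhead : (0:ℝ) ≤ ∏ m ∈ Finset.range n, (fun m : ℕ => lamt c k v w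
        (cwin c k z.1 ⟨m % k, Nat.mod_lt _ hk⟩, cwin c k z.2 ⟨m % k, Nat.mod_lt _ hk⟩)) m :=
      Finset.prod_nonneg fun m _ => lamt_nonneg c k v w _
    exact mul_le_of_le_one_right hhead htail
  -- Step 2 : injectivity of emap on the fiber
  have step2 : ∀ z ∈ T, ∀ z' ∈ T, emap c k n hk z = emap c k n hk z' → z = z' := by
    intro z hz z' hz' he
    rw [hT, Finset.mem_filter] at hz hz'
    obtain ⟨-, -, hsz⟩ := hz
    obtain ⟨-, -, hsz'⟩ := hz'
    have comp : ∀ (a a' : Fin k → Bool),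
        cwin (c-1) k a ⟨0 % k, Nat.mod_lt _ hk⟩ = cwin (c-1) k a' ⟨0 % k, Nat.mod_lt _ hk⟩ →
        (∀ t : Fin n, a ⟨((t : ℕ) + (c - 1)) % k, Nat.mod_lt _ hk⟩
          = a' ⟨((t : ℕ) + (c - 1)) % k, Nat.mod_lt _ hk⟩) →
        a = a' := by
      intro a a' hσ hkey
      funext j
      rcases lt_or_ge (j : ℕ) (c-1) with hlt | hge
      · have h1 := congrFun hσ ⟨(j : ℕ), hlt⟩
        have hidx : ∀ b : Fin k → Bool,
            cwin (c-1) k b ⟨0 % k, Nat.mod_lt _ hk⟩ ⟨(j : ℕ), hlt⟩ = b j := by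
          intro b
          show b _ = b j
          congr 1
          exact Fin.ext (by simp [Nat.mod_eq_of_lt j.2])
        rw [hidx, hidx] at h1
        exact h1
      · have hmn : (j : ℕ) - (c-1) < n := by have := j.2; omega
        have h2 := hkey ⟨(j : ℕ) - (c-1), hmn⟩
        have hidx : (⟨((((j : ℕ) - (c-1))) + (c - 1)) % k, Nat.mod_lt _ hk⟩ : Fin k) = j :=
          Fin.ext (by simp [Nat.sub_add_cancel hge, Nat.mod_eq_of_lt j.2])
        rw [hidx] at h2
        exact h2
    have hσ1 : cwin (c-1) k z.1 ⟨0 % k, Nat.mod_lt _ hk⟩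
        = cwin (c-1) k z'.1 ⟨0 % k, Nat.mod_lt _ hk⟩ := by
      have a1 := congrArg Prod.fst hsz
      have a2 := congrArg Prod.fst hsz'
      simp only at a1 a2
      rw [a1, a2]
    have hσ2 : cwin (c-1) k z.2 ⟨0 % k, Nat.mod_lt _ hk⟩
        = cwin (c-1) k z'.2 ⟨0 % k, Nat.mod_lt _ hk⟩ := by
      have a1 := congrArg Prod.snd hsz
      have a2 := congrArg Prod.snd hsz'
      simp only at a1 a2
      rw [a1, a2]
    refine Prod.ext ?_ ?_
    · refine comp z.1 z'.1 hσ1 fun t => ?_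
      have := congrFun he t
      exact congrArg Prod.fst this
    · refine comp z.2 z'.2 hσ2 fun t => ?_
      have := congrFun he t
      exact congrArg Prod.snd this
  -- Step 3 : assemble
  calc (T.card : ℝ) * Qval c k v w
      = ∑ _z ∈ T, Qval c k v w := by rw [Finset.sum_const, nsmul_eq_mul]
    _ ≤ ∑ z ∈ T, F (emap c k n hk z) := Finset.sum_le_sum step1
    _ = ∑ h ∈ T.image (emap c k n hk), F h := (Finset.sum_image step2).symm
    _ ≤ ∑ h : Fin n → Bool × Bool, F h := by
        refine Finset.sum_le_sum_of_subset_of_nonneg (Finset.subset_univ _) ?_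
        intro h _ _
        exact hFnonneg h
    _ ≤ 1 := tree_sum (pker c k v w) (dstep c) (pker_nonneg c k v w)
        (pker_sum_le_one c k v w) n s

lemma main_case_bound (c k : ℕ) (hc : 1 ≤ c) (hkc : c ≤ k) (v w : Fin k → Bool) :
    (((univ.filter fun z : (Fin k → Bool) × (Fin k → Bool) =>
        jctype c k z.1 z.2 = jctype c k v w).card : ℝ))
      ≤ (2:ℝ) ^ (2 * (c - 1)) * (2:ℝ) ^ ((k:ℝ) * HcondJ c (jctype c k v w)) := by
  have hk : 0 < k := lt_of_lt_of_le hc hkc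
  have hQpos := Qval_pos c k hc v w
  set T := (univ.filter fun z : (Fin k → Bool) × (Fin k → Bool) =>
      jctype c k z.1 z.2 = jctype c k v w) with hT
  have hfib : T.card = ∑ s : (Fin (c-1) → Bool) × (Fin (c-1) → Bool),
      (T.filter fun z => (cwin (c-1) k z.1 ⟨0 % k, Nat.mod_lt _ hk⟩,
        cwin (c-1) k z.2 ⟨0 % k, Nat.mod_lt _ hk⟩) = s).card :=
    Finset.card_eq_sum_card_fiberwise (fun z _ => Finset.mem_univ _)
  have hbound : (T.card : ℝ) * Qval c k v w
      ≤ (2:ℝ) ^ (c - 1) * (2:ℝ) ^ (c - 1) := by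
    rw [hfib]
    push_cast
    rw [Finset.sum_mul]
    calc (∑ s : (Fin (c-1) → Bool) × (Fin (c-1) → Bool),
          ((T.filter fun z => (cwin (c-1) k z.1 ⟨0 % k, Nat.mod_lt _ hk⟩,
            cwin (c-1) k z.2 ⟨0 % k, Nat.mod_lt _ hk⟩) = s).card : ℝ) * Qval c k v w)
        ≤ ∑ _s : (Fin (c-1) → Bool) × (Fin (c-1) → Bool), (1:ℝ) := by
          refine Finset.sum_le_sum fun s _ => ?_
          have := card_fiber_bound c k hc hkc v w s
          rw [hT, Finset.filter_filter]
          exact this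
      _ = (Fintype.card ((Fin (c-1) → Bool) × (Fin (c-1) → Bool)) : ℝ) := by
          rw [Finset.sum_const, Finset.card_univ, nsmul_eq_mul, mul_one]
      _ = (2:ℝ) ^ (c - 1) * (2:ℝ) ^ (c - 1) := by
          rw [Fintype.card_prod, Fintype.card_fun]
          push_cast
          simp
  have hcard : (T.card : ℝ) ≤ ((2:ℝ) ^ (c - 1) * (2:ℝ) ^ (c - 1)) * (Qval c k v w)⁻¹ := by
    rw [← div_eq_mul_inv, le_div_iff₀ hQpos]
    exact hbound
  calc (T.card : ℝ) ≤ ((2:ℝ) ^ (c - 1) * (2:ℝ) ^ (c - 1)) * (Qval c k v w)⁻¹ := hcard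
    _ = (2:ℝ) ^ (2 * (c - 1)) * (2:ℝ) ^ ((k:ℝ) * HcondJ c (jctype c k v w)) := by
        rw [Qval_eq c k hc hk v w, Real.rpow_neg (by norm_num : (0:ℝ) ≤ 2), inv_inv,
          two_mul, pow_add]

lemma hcondJ_nonneg (c k : ℕ) (hc : 1 ≤ c) (hk : 0 < k) (v w : Fin k → Bool) :
    0 ≤ (k:ℝ) * HcondJ c (jctype c k v w) := by
  rw [hcond_eq c k hc hk v w]
  refine Finset.sum_nonneg fun u _ => ?_
  rcases Nat.eq_zero_or_pos (wcount c k v w u) with h0 | hpos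
  · simp [h0]
  · have hNM := wcount_le_pcount c k hc v w u
    refine mul_nonneg (Nat.cast_nonneg _) (Real.logb_nonneg one_lt_two ?_)
    rw [le_div_iff₀ (by exact_mod_cast hpos : (0:ℝ) < (wcount c k v w u : ℝ)), one_mul]
    exact_mod_cast hNM

/-- **Upper bound on the size of a circular `c`-order joint type class**: the number of
pairs of binary vectors of length `k` with circular `c`-order joint type `λ` satisfies
`|𝒯^k_λ| ≤ C₂ · 2^{k H(λ̃|λ')}` with `C₂ = 2^{2(c−1)}`. -/
theorem joint_type_class_size_upper_bound
    (c k : ℕ) (lam : (Fin c → Bool) → (Fin c → Bool) → ℝ) :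
    (Set.ncard {p : (Fin k → Bool) × (Fin k → Bool) | jctype c k p.1 p.2 = lam} : ℝ) ≤
      (2 : ℝ) ^ (2 * (c - 1)) * (2 : ℝ) ^ ((k : ℝ) * HcondJ c lam) := by
  rcases Set.eq_empty_or_nonempty
      {p : (Fin k → Bool) × (Fin k → Bool) | jctype c k p.1 p.2 = lam} with hemp | hne
  · rw [hemp, Set.ncard_empty]
    push_cast
    positivity
  · obtain ⟨⟨v, w⟩, hvw⟩ := hne
    have hvw' : jctype c k v w = lam := hvw
    subst hvw'
    have hset : {p : (Fin k → Bool) × (Fin k → Bool) | jctype c k p.1 p.2 = jctype c k v w}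
        = ↑(univ.filter fun p : (Fin k → Bool) × (Fin k → Bool) =>
            jctype c k p.1 p.2 = jctype c k v w) := by
      ext p; simp
    rw [hset, Set.ncard_coe_finset]
    set T := (univ.filter fun p : (Fin k → Bool) × (Fin k → Bool) =>
        jctype c k p.1 p.2 = jctype c k v w) with hT
    have hcard_le : (T.card : ℝ) ≤ ((2:ℝ) ^ k) * ((2:ℝ) ^ k) := by
      have h1 : T.card ≤ Fintype.card ((Fin k → Bool) × (Fin k → Bool)) := by
        rw [← Finset.card_univ]
        exact Finset.card_filter_le _ _
      have h2 : Fintype.card ((Fin k → Bool) × (Fin k → Bool)) = 2^k * 2^k := by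
        rw [Fintype.card_prod, Fintype.card_fun]
        simp
      calc (T.card : ℝ) ≤ (Fintype.card ((Fin k → Bool) × (Fin k → Bool)) : ℝ) := by
            exact_mod_cast h1
        _ = ((2:ℝ) ^ k) * ((2:ℝ) ^ k) := by rw [h2]; push_cast; ring
    rcases Nat.eq_zero_or_pos k with hk0 | hk
    · subst hk0
      rw [Nat.cast_zero, zero_mul, Real.rpow_zero, mul_one]
      have : (T.card : ℝ) ≤ 1 := by simpa using hcard_le
      calc (T.card : ℝ) ≤ 1 := this
        _ ≤ (2:ℝ) ^ (2 * (c - 1)) := one_le_pow₀ one_le_two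
    rcases Nat.eq_zero_or_pos c with hc0 | hc
    · subst hc0
      -- c = 0 : compute HcondJ = 8 directly
      have hval : ∀ a b : Fin 0 → Bool, jctype 0 k v w a b = 1 := by
        intro a b
        unfold jctype
        rw [show (univ.filter fun t : Fin k => cwin 0 k v t = a ∧ cwin 0 k w t = b) = univ by
          refine Finset.filter_true_of_mem fun t _ => ⟨Subsingleton.elim _ _, Subsingleton.elim _ _⟩]
        rw [Finset.card_univ, Fintype.card_fin, div_self (Nat.cast_ne_zero.mpr hk.ne')]
      have hlogb4 : Real.logb 2 4 = 2 := by
        rw [show (4:ℝ) = 2^(2:ℕ) by norm_num, Real.logb_pow, Real.logb_self_eq_one] <;> norm_num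
      have hH : HcondJ 0 (jctype 0 k v w) = 8 := by
        unfold HcondJ H2 margPrefix2
        simp only [hval]
        simp [Fintype.sum_bool, Real.logb_one, hlogb4]
        norm_num [hlogb4]
      rw [hH]
      have h0 : (2:ℝ) ^ (2 * (0 - 1)) = 1 := by norm_num
      rw [h0, one_mul]
      calc (T.card : ℝ) ≤ ((2:ℝ) ^ k) * ((2:ℝ) ^ k) := hcard_le
        _ = (2:ℝ) ^ ((k + k : ℕ) : ℝ) := by
            rw [Real.rpow_natCast]; push_cast; rw [pow_add]
        _ ≤ (2:ℝ) ^ ((k:ℝ) * 8) := by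
            refine Real.rpow_le_rpow_of_exponent_le one_le_two ?_
            push_cast
            nlinarith [Nat.cast_nonneg (α := ℝ) k]
    rcases lt_or_ge k c with hkc | hkc
    · -- k < c : crude bound
      have hRnn : 1 ≤ (2:ℝ) ^ ((k:ℝ) * HcondJ c (jctype c k v w)) := by
        rw [show (1:ℝ) = (2:ℝ) ^ (0:ℝ) from (Real.rpow_zero 2).symm]
        exact Real.rpow_le_rpow_of_exponent_le one_le_two (hcondJ_nonneg c k hc hk v w)
      have hA : (T.card : ℝ) ≤ (2:ℝ) ^ (2 * (c - 1)) := by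
        calc (T.card : ℝ) ≤ ((2:ℝ) ^ k) * ((2:ℝ) ^ k) := hcard_le
          _ = (2:ℝ) ^ (k + k) := (pow_add 2 k k).symm
          _ ≤ (2:ℝ) ^ (2 * (c - 1)) := by
              refine pow_le_pow_right₀ one_le_two ?_
              omega
      calc (T.card : ℝ) ≤ (2:ℝ) ^ (2 * (c - 1)) := hA
        _ ≤ (2:ℝ) ^ (2 * (c - 1)) * (2:ℝ) ^ ((k:ℝ) * HcondJ c (jctype c k v w)) := by
            exact le_mul_of_one_le_right (by positivity) hRnn
    · exact main_case_bound c k hc hkc v w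
end
end

section
/- Counting bounds for two-dimensional types: For binary k×k target fields with circular boundary conditions, (i) the number α(γ_i, k) of fields with two-dimensional type γ_i is at most 2^{k² H((γ_{i(0)}, γ_{i(1)}))}, and (ii) the number β(λ, k) of fields f_j having two-dimensional joint type λ with a fixed field f_i is at most 2^{k² H((γ_{j(0)}, γ_{j(1)}))}, where γ_j is the second marginal type of λ and H is the binary Shannon entropy (base 2) of the indicated pair of fractions. -/
open Finset Filter

noncomputable section

/-- Kullback–Leibler divergence (base 2). -/
def KL2 {α : Type*} [Fintype α] (p q : α → ℝ) : ℝ :=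
  ∑ a, p a * Real.logb 2 (p a / q a)

/-- The coverage offsets of a sensor of Euclidean range `c`: integer offsets within
Euclidean distance `c` of the sensor's grid location. -/
def Off (c : ℕ) : Finset (ℤ × ℤ) :=
  (Finset.Icc (-(c : ℤ)) (c : ℤ) ×ˢ Finset.Icc (-(c : ℤ)) (c : ℤ)).filter
    fun p => p.1 ^ 2 + p.2 ^ 2 ≤ (c : ℤ) ^ 2

theorem zero_mem_Off (c : ℕ) : ((0, 0) : ℤ × ℤ) ∈ Off c := by
  simp only [Off, Finset.mem_filter, Finset.mem_product, Finset.mem_Icc]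
  refine ⟨⟨⟨by simp, by simp⟩, ⟨by simp, by simp⟩⟩, by positivity⟩

/-- The center offset `(0,0)` of the coverage region. -/
def center (c : ℕ) : {p : ℤ × ℤ // p ∈ Off c} := ⟨(0, 0), zero_mem_Off c⟩

/-- Circular (toroidal) wrap-around indexing. -/
def wrap (k : ℕ) (h : Fin k) (z : ℤ) : Fin k :=
  ⟨(((h : ℤ) + z) % (k : ℤ)).toNat, by
    have hk : 0 < (k : ℤ) := by exact_mod_cast h.pos
    have h0 : 0 ≤ ((h : ℤ) + z) % (k : ℤ) := Int.emod_nonneg _ (ne_of_gt hk)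
    have h1 : ((h : ℤ) + z) % (k : ℤ) < (k : ℤ) := Int.emod_lt_of_pos _ hk
    omega⟩

/-- The pattern seen by a sensor of range `c` placed at grid block `h` of the binary
field `f` (toroidal boundary conditions). -/
def win2 (c k : ℕ) (f : Fin k × Fin k → Bool) (h : Fin k × Fin k)
    (o : {p : ℤ × ℤ // p ∈ Off c}) : Bool :=
  f (wrap k h.1 o.1.1, wrap k h.2 o.1.2)

/-- The two-dimensional type of the field `f`: frequencies, over the `k²` sensor
placements, of each possible pattern on the coverage region. -/
def type2 (c k : ℕ) (f : Fin k × Fin k → Bool)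
    (a : {p : ℤ × ℤ // p ∈ Off c} → Bool) : ℝ :=
  ((univ.filter fun h : Fin k × Fin k => win2 c k f h = a).card : ℝ) / (k ^ 2 : ℕ)

/-- The two-dimensional joint type of a pair of fields `(f₁, f₂)`. -/
def jtype2 (c k : ℕ) (f₁ f₂ : Fin k × Fin k → Bool)
    (a b : {p : ℤ × ℤ // p ∈ Off c} → Bool) : ℝ :=
  ((univ.filter fun h : Fin k × Fin k =>
      win2 c k f₁ h = a ∧ win2 c k f₂ h = b).card : ℝ) / (k ^ 2 : ℕ)

/-- The single-position (bit) marginal of a two-dimensional type, via the pattern value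
at the center of the coverage region. -/
def bit2 (c : ℕ) (γ : ({p : ℤ × ℤ // p ∈ Off c} → Bool) → ℝ) (x : Bool) : ℝ :=
  ∑ a : {p : ℤ × ℤ // p ∈ Off c} → Bool, if a (center c) = x then γ a else 0

/-- The single-position pair marginal `λ_{(x)(y)}` of a two-dimensional joint type. -/
def bitJ2 (c : ℕ)
    (lam : ({p : ℤ × ℤ // p ∈ Off c} → Bool) → ({p : ℤ × ℤ // p ∈ Off c} → Bool) → ℝ)
    (x y : Bool) : ℝ :=
  ∑ a : {p : ℤ × ℤ // p ∈ Off c} → Bool, ∑ b : {p : ℤ × ℤ // p ∈ Off c} → Bool,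
    if a (center c) = x ∧ b (center c) = y then lam a b else 0

/-- First marginal of a two-dimensional joint type. -/
def margFst2 (c : ℕ)
    (lam : ({p : ℤ × ℤ // p ∈ Off c} → Bool) → ({p : ℤ × ℤ // p ∈ Off c} → Bool) → ℝ)
    (a : {p : ℤ × ℤ // p ∈ Off c} → Bool) : ℝ :=
  ∑ b : {p : ℤ × ℤ // p ∈ Off c} → Bool, lam a b

/-- Second marginal of a two-dimensional joint type. -/
def margSnd2 (c : ℕ)
    (lam : ({p : ℤ × ℤ // p ∈ Off c} → Bool) → ({p : ℤ × ℤ // p ∈ Off c} → Bool) → ℝ)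
    (b : {p : ℤ × ℤ // p ∈ Off c} → Bool) : ℝ :=
  ∑ a : {p : ℤ × ℤ // p ∈ Off c} → Bool, lam a b


section Aux
set_option maxHeartbeats 1000000

lemma choose_le_entropy (n m : ℕ) (hn : 0 < n) (hm : m ≤ n) (p : Bool → ℝ)
    (ht : p true = (m : ℝ) / n) (hf : p false = ((n - m : ℕ) : ℝ) / n) :
    (n.choose m : ℝ) ≤ (2 : ℝ) ^ ((n : ℝ) * H2 p) := by
  have hn' : (n : ℝ) ≠ 0 := Nat.cast_ne_zero.mpr hn.ne'
  rcases Nat.eq_zero_or_pos m with hm0 | hmpos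
  · subst hm0
    have hH : H2 p = 0 := by
      simp [H2, Fintype.sum_bool, ht, hf, Nat.sub_zero, div_self hn']
    simp [hH]
  rcases eq_or_lt_of_le hm with hmn | hmlt
  · subst hmn
    have hH : H2 p = 0 := by
      simp [H2, Fintype.sum_bool, ht, hf, div_self hn']
    simp [hH]
  set P : ℝ := (m : ℝ) / n with hP
  set Q : ℝ := ((n - m : ℕ) : ℝ) / n with hQ
  have hPpos : 0 < P := by positivity
  have hQpos : 0 < Q := by
    have : (0 : ℝ) < ((n - m : ℕ) : ℝ) := by exact_mod_cast Nat.sub_pos_of_lt hmlt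
    positivity
  have hPQ : P + Q = 1 := by
    rw [hP, hQ, ← add_div, div_eq_one_iff_eq hn']
    push_cast [Nat.cast_sub hm]
    ring
  have key : (n.choose m : ℝ) * (P ^ m * Q ^ (n - m)) ≤ 1 := by
    have h1 : P ^ m * Q ^ (n - m) * (n.choose m : ℝ) ≤
        ∑ i ∈ Finset.range (n + 1), P ^ i * Q ^ (n - i) * (n.choose i : ℝ) := by
      apply Finset.single_le_sum (f := fun i => P ^ i * Q ^ (n - i) * (n.choose i : ℝ))
      · intro i _; positivity
      · exact Finset.mem_range.mpr (Nat.lt_succ_of_le hm)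
    have h2 : (P + Q) ^ n = ∑ i ∈ Finset.range (n + 1),
        P ^ i * Q ^ (n - i) * (n.choose i : ℝ) := add_pow P Q n
    rw [hPQ, one_pow] at h2
    calc (n.choose m : ℝ) * (P ^ m * Q ^ (n - m))
        = P ^ m * Q ^ (n - m) * (n.choose m : ℝ) := by ring
      _ ≤ _ := h1
      _ = 1 := h2.symm
  have hchoose : (n.choose m : ℝ) ≤ (P ^ m)⁻¹ * (Q ^ (n - m))⁻¹ := by
    rw [← mul_inv, ← one_div]
    exact (le_div_iff₀ (by positivity)).mpr key
  refine hchoose.trans_eq ?_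
  have hnP : (n : ℝ) * P = (m : ℝ) := by rw [hP]; field_simp
  have hnQ : (n : ℝ) * Q = ((n - m : ℕ) : ℝ) := by rw [hQ]; field_simp
  have hH : (n : ℝ) * H2 p
      = (-(m : ℝ)) * Real.logb 2 P + (-((n - m : ℕ) : ℝ)) * Real.logb 2 Q := by
    simp only [H2, Fintype.sum_bool, ht, hf, ← hP, ← hQ]
    rw [← hnP, ← hnQ]; ring
  rw [hH, Real.rpow_add two_pos]
  have e1 : (2 : ℝ) ^ ((-(m : ℝ)) * Real.logb 2 P) = (P ^ m)⁻¹ := by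
    rw [mul_comm, Real.rpow_mul (by norm_num), Real.rpow_logb two_pos (by norm_num) hPpos,
      Real.rpow_neg hPpos.le, Real.rpow_natCast]
  have e2 : (2 : ℝ) ^ ((-((n - m : ℕ) : ℝ)) * Real.logb 2 Q) = (Q ^ (n - m))⁻¹ := by
    rw [mul_comm, Real.rpow_mul (by norm_num), Real.rpow_logb two_pos (by norm_num) hQpos,
      Real.rpow_neg hQpos.le, Real.rpow_natCast]
  rw [e1, e2]

lemma wrap_zero (k : ℕ) (h : Fin k) : wrap k h 0 = h := by
  ext
  simp only [wrap, add_zero]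
  rw [Int.emod_eq_of_lt (by exact_mod_cast Nat.zero_le _) (by exact_mod_cast h.2)]
  simp

lemma win2_center (c k : ℕ) (f : Fin k × Fin k → Bool) (h : Fin k × Fin k) :
    win2 c k f h (center c) = f h := by
  simp [win2, center, wrap_zero]

/-- Summing pattern counts over patterns with given center value gives the bit count. -/
lemma sum_if_center (c k : ℕ) (f : Fin k × Fin k → Bool) (x : Bool) :
    ∑ b : {p : ℤ × ℤ // p ∈ Off c} → Bool,
      (if b (center c) = x then
        (((univ.filter fun h : Fin k × Fin k => win2 c k f h = b).card : ℝ)) else 0)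
      = ((univ.filter fun h : Fin k × Fin k => f h = x).card : ℝ) := by
  rw [← Finset.sum_filter]
  have hcard : (univ.filter fun h : Fin k × Fin k => f h = x).card
      = ∑ b ∈ univ.filter (fun b : {p : ℤ × ℤ // p ∈ Off c} → Bool => b (center c) = x),
        ((univ.filter fun h : Fin k × Fin k => f h = x).filter
          (fun h => win2 c k f h = b)).card := by
    apply Finset.card_eq_sum_card_fiberwise
    intro h hh
    simp only [Finset.mem_coe, Finset.mem_filter, Finset.mem_univ, true_and] at hh ⊢
    rw [win2_center, hh]
  rw [hcard]
  push_cast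
  apply Finset.sum_congr rfl
  intro b hb
  simp only [Finset.mem_filter, Finset.mem_univ, true_and] at hb
  have heq : ((univ.filter fun h : Fin k × Fin k => f h = x).filter
      (fun h => win2 c k f h = b)) = univ.filter fun h : Fin k × Fin k => win2 c k f h = b := by
    rw [Finset.filter_filter]
    apply Finset.filter_congr
    intro h _
    constructor
    · rintro ⟨_, h2⟩; exact h2
    · intro h2
      refine ⟨?_, h2⟩
      rw [← hb, ← h2, win2_center]
  rw [heq]

lemma bit2_type2 (c k : ℕ) (f : Fin k × Fin k → Bool) (x : Bool) :
    bit2 c (type2 c k f) x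
      = ((univ.filter fun h : Fin k × Fin k => f h = x).card : ℝ) / ((k ^ 2 : ℕ) : ℝ) := by
  rw [← sum_if_center c k f x, bit2, Finset.sum_div]
  apply Finset.sum_congr rfl
  intro b _
  split <;> simp [type2]

lemma bit2_jtype2 (c k : ℕ) (f f' : Fin k × Fin k → Bool) (x : Bool) :
    bit2 c (margSnd2 c (jtype2 c k f f')) x
      = ((univ.filter fun h : Fin k × Fin k => f' h = x).card : ℝ) / ((k ^ 2 : ℕ) : ℝ) := by
  have inner : ∀ b, margSnd2 c (jtype2 c k f f') b
      = ((univ.filter fun h : Fin k × Fin k => win2 c k f' h = b).card : ℝ) / ((k ^ 2 : ℕ) : ℝ) := by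
    intro b
    simp only [margSnd2, jtype2]
    rw [← Finset.sum_div]
    congr 1
    have hcard : (univ.filter fun h : Fin k × Fin k => win2 c k f' h = b).card
        = ∑ a : {p : ℤ × ℤ // p ∈ Off c} → Bool,
          ((univ.filter fun h : Fin k × Fin k => win2 c k f' h = b).filter
            (fun h => win2 c k f h = a)).card := by
      apply Finset.card_eq_sum_card_fiberwise
      intro h _; exact Finset.mem_univ _
    rw [hcard]
    push_cast
    apply Finset.sum_congr rfl
    intro a _
    have heq : ((univ.filter fun h : Fin k × Fin k => win2 c k f' h = b).filter
        (fun h => win2 c k f h = a))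
        = univ.filter fun h : Fin k × Fin k => win2 c k f h = a ∧ win2 c k f' h = b := by
      rw [Finset.filter_filter]
      apply Finset.filter_congr
      intro h _
      simp [and_comm]
    rw [heq]
  rw [← sum_if_center c k f' x, bit2, Finset.sum_div]
  apply Finset.sum_congr rfl
  intro b _
  rw [inner b]
  split <;> simp

lemma card_false_eq (k n m : ℕ) (f0 : Fin k × Fin k → Bool)
    (hm : m = (univ.filter fun h : Fin k × Fin k => f0 h = true).card)
    (hcard : Fintype.card (Fin k × Fin k) = n) :
    (univ.filter fun h : Fin k × Fin k => f0 h = false).card = n - m := by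
  have h1 := Finset.card_filter_add_card_filter_not
    (s := (univ : Finset (Fin k × Fin k))) (p := fun h => f0 h = true)
  have h2 : (univ.filter fun a : Fin k × Fin k => ¬ f0 a = true)
      = univ.filter fun h : Fin k × Fin k => f0 h = false := by
    apply Finset.filter_congr
    intro h _
    simp
  rw [h2, Finset.card_univ, hcard] at h1
  omega

/-- The master counting bound. -/
lemma count_bound (k : ℕ) (p : Bool → ℝ) (S : Set (Fin k × Fin k → Bool))
    (hS : ∀ f' ∈ S, ∀ x,
      p x = ((univ.filter fun h : Fin k × Fin k => f' h = x).card : ℝ) / ((k ^ 2 : ℕ) : ℝ)) :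
    (S.ncard : ℝ) ≤ (2 : ℝ) ^ (((k ^ 2 : ℕ) : ℝ) * H2 p) := by
  rcases S.eq_empty_or_nonempty with hE | ⟨f0, hf0⟩
  · rw [hE]
    simpa using (Real.rpow_pos_of_pos two_pos _).le
  set n := k ^ 2 with hn
  have hcardgrid : Fintype.card (Fin k × Fin k) = n := by
    simp [hn, sq]
  set m := (univ.filter fun h : Fin k × Fin k => f0 h = true).card with hm
  clear_value n m
  have hmn : m ≤ n := by
    rw [hm, ← hcardgrid, ← Finset.card_univ]
    exact Finset.card_filter_le _ _
  rcases Nat.eq_zero_or_pos k with hk0 | hkpos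
  · subst hk0
    have h1 : S.ncard ≤ 1 := by
      have := Set.ncard_le_ncard (Set.subset_univ S) Set.finite_univ
      simpa [Set.ncard_univ, Nat.card_eq_fintype_card] using this
    have hzero : ((n : ℕ) : ℝ) * H2 p = 0 := by rw [hn]; norm_num
    rw [hzero, Real.rpow_zero]
    exact_mod_cast h1
  have hnpos : 0 < n := by rw [hn]; positivity
  have hn' : ((n : ℕ) : ℝ) ≠ 0 := Nat.cast_ne_zero.mpr hnpos.ne'
  -- every member of S has exactly m ones
  have hkey : ∀ f' ∈ S, (univ.filter fun h : Fin k × Fin k => f' h = true).card = m := by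
    intro f' hf'
    have h1 := (hS f' hf' true).symm.trans (hS f0 hf0 true)
    rw [div_eq_div_iff (by positivity) (by positivity)] at h1
    have := mul_right_cancel₀ hn' h1
    rw [hm]
    exact_mod_cast this
  -- S is contained in the set of fields with exactly m ones
  have hsub : S ⊆ {f' : Fin k × Fin k → Bool |
      (univ.filter fun h : Fin k × Fin k => f' h = true).card = m} := fun f' hf' => hkey f' hf'
  have hTcard : ({f' : Fin k × Fin k → Bool |
      (univ.filter fun h : Fin k × Fin k => f' h = true).card = m}).ncard = n.choose m := by
    rw [← Nat.card_coe_set_eq]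
    show Nat.card {f' : Fin k × Fin k → Bool //
        (univ.filter fun h : Fin k × Fin k => f' h = true).card = m} = n.choose m
    have e : {f' : Fin k × Fin k → Bool //
        (univ.filter fun h : Fin k × Fin k => f' h = true).card = m}
        ≃ {s : Finset (Fin k × Fin k) // s.card = m} :=
      { toFun := fun f => ⟨univ.filter fun h => f.1 h = true, f.2⟩
        invFun := fun s => ⟨fun h => h ∈ s.1, by simpa using s.2⟩
        left_inv := by
          rintro ⟨f, hf⟩
          ext h
          simp
        right_inv := by
          rintro ⟨s, hs⟩
          ext h
          simp }
    rw [Nat.card_congr e, Nat.card_eq_fintype_card, Fintype.card_finset_len, hcardgrid]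
  have hle : (S.ncard : ℝ) ≤ (n.choose m : ℝ) := by
    have := Set.ncard_le_ncard hsub (Set.toFinite _)
    rw [hTcard] at this
    exact_mod_cast this
  refine hle.trans ?_
  apply choose_le_entropy n m hnpos hmn
  · rw [hS f0 hf0 true, hm]
  · rw [hS f0 hf0 false, card_false_eq k n m f0 hm hcardgrid]
    
end Aux

/-- **Counting bounds for two-dimensional types**: (i) the number of binary `k × k`
fields of two-dimensional type `γ` is at most `2^{k² H((γ_{(0)}, γ_{(1)}))}`; (ii) for
any fixed field `f`, the number of fields having two-dimensional joint type `λ` with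
`f` is at most `2^{k² H((γ_{j(0)}, γ_{j(1)}))}`, `γ_j` the second marginal of `λ`. -/
theorem two_dimensional_type_counting_bounds
    (c k : ℕ) (γ : ({p : ℤ × ℤ // p ∈ Off c} → Bool) → ℝ)
    (lam : ({p : ℤ × ℤ // p ∈ Off c} → Bool) → ({p : ℤ × ℤ // p ∈ Off c} → Bool) → ℝ)
    (f : Fin k × Fin k → Bool) :
    (Set.ncard {f' : Fin k × Fin k → Bool | type2 c k f' = γ} : ℝ) ≤
        (2 : ℝ) ^ (((k ^ 2 : ℕ) : ℝ) * H2 (fun x : Bool => bit2 c γ x)) ∧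
      (Set.ncard {f' : Fin k × Fin k → Bool | jtype2 c k f f' = lam} : ℝ) ≤
        (2 : ℝ) ^ (((k ^ 2 : ℕ) : ℝ) * H2 (fun x : Bool => bit2 c (margSnd2 c lam) x)) := by
  constructor
  · apply count_bound
    intro f' hf' x
    rw [← hf', bit2_type2]
  · apply count_bound
    intro f' hf' x
    rw [← hf', bit2_jtype2]
end
end
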